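/- Let Y = {Yⁿ} be the mixed source of two i.i.d. sources Y₁, Y₂ on a countable alphabet 𝒴 with weights w(1), w(2). Let {z_n} be any sequence of real numbers and let {γ_n} be a sequence with γ₁ > γ₂ > ⋯ > 0, γ_n → 0, and √n·γ_n → ∞. Then for i = 1, 2 and all sufficiently large n, Pr{ (1/√n) log(1/P_{Yⁿ}(Yᵢⁿ)) ≥ z_n } ≤ Pr{ (1/√n) log(1/P_{Yᵢⁿ}(Yᵢⁿ)) ≥ z_n − γ_n }, where Yᵢⁿ is distributed according to the n-fold i.i.d. extension P_{Yᵢⁿ} of Yᵢ. -/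

import Mathlib

open Filter MeasureTheory
open scoped BigOperators

noncomputable section

/-- Probability of a set under a probability mass function. -/
def prb {α : Type*} (P : α → ℝ) (s : Set α) : ℝ := ∑' a, s.indicator P a

/-- Variational distance between two mass functions on the same countable set. -/
def varDist {α : Type*} (P Q : α → ℝ) : ℝ := ∑' a, |P a - Q a|

/-- `P` is a probability mass function. -/
def IsPMF {α : Type*} (P : α → ℝ) : Prop := (∀ a, 0 ≤ P a) ∧ HasSum P 1

/-- Pushforward of a mass function through a map. -/
def pushMap {α β : Type*} (P : α → ℝ) (φ : α → β) : β → ℝ :=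
  fun b => ∑' a, Set.indicator {a | φ a = b} P a

/-- The uniform mass function on `Fin M`. -/
def unif (M : ℕ) : Fin M → ℝ := fun _ => 1 / (M : ℝ)

/-- The n-fold i.i.d. extension of a mass function. -/
def prodP {α : Type*} (P : α → ℝ) (n : ℕ) : (Fin n → α) → ℝ := fun y => ∏ j, P (y j)

/-- Mixed source of two i.i.d. sources with weights `w1`, `w2`. -/
def mix2 {α : Type*} (P1 P2 : α → ℝ) (w1 w2 : ℝ) (n : ℕ) : (Fin n → α) → ℝ :=
  fun y => w1 * prodP P1 n y + w2 * prodP P2 n y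


lemma prodP_nonneg {α : Type*} {P : α → ℝ} (h : ∀ a, 0 ≤ P a) (n : ℕ) (y : Fin n → α) :
    0 ≤ prodP P n y := Finset.prod_nonneg fun j _ => h (y j)

lemma summable_prodP {α : Type*} [Countable α] {P : α → ℝ} (hnn : ∀ a, 0 ≤ P a)
    (hs : Summable P) (n : ℕ) : Summable (prodP P n) := by
  induction n with
  | zero => exact .of_finite
  | succ n ih =>
    rw [← (Fin.consEquiv fun _ : Fin (n+1) => α).summable_iff]
    have : (prodP P (n+1)) ∘ (Fin.consEquiv fun _ : Fin (n+1) => α)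
        = fun p : α × (Fin n → α) => P p.1 * prodP P n p.2 := by
      funext p
      simp [prodP, Fin.prod_univ_succ]
    rw [this]
    exact hs.mul_of_nonneg ih hnn (prodP_nonneg hnn n)

lemma prb_mono_support {α : Type*} {P : α → ℝ} (hnn : ∀ a, 0 ≤ P a) (hs : Summable P)
    {s t : Set α} (h : ∀ a, 0 < P a → a ∈ s → a ∈ t) : prb P s ≤ prb P t := by
  refine Summable.tsum_le_tsum (fun a => ?_) (hs.indicator s) (hs.indicator t)
  rcases lt_or_eq_of_le (hnn a) with hP | hP
  · by_cases has : a ∈ s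
    · rw [Set.indicator_of_mem has, Set.indicator_of_mem (h a hP has)]
    · rw [Set.indicator_of_notMem has]
      exact Set.indicator_nonneg (fun x _ => hnn x) a
  · unfold Set.indicator
    split_ifs <;> simp [← hP]

lemma key_aux {α : Type*} [Countable α] (Pi : α → ℝ) (hPi : IsPMF Pi)
    (Q : (n : ℕ) → (Fin n → α) → ℝ) (wi : ℝ) (hwi : 0 < wi)
    (hQ : ∀ n y, wi * prodP Pi n y ≤ Q n y)
    (z γ : ℕ → ℝ)
    (hγtop : Tendsto (fun n : ℕ => Real.sqrt n * γ n) atTop atTop) :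
    ∃ N : ℕ, ∀ n ≥ N,
      prb (prodP Pi n) {y | z n ≤ (1 / Real.sqrt n) * Real.log (1 / Q n y)}
        ≤ prb (prodP Pi n) {y | z n - γ n ≤ (1 / Real.sqrt n) * Real.log (1 / prodP Pi n y)} := by
  obtain ⟨N, hN⟩ := (hγtop.eventually_ge_atTop (Real.log (1 / wi))).exists_forall_of_atTop
  refine ⟨max N 1, fun n hn => ?_⟩
  have hn1 : (1 : ℕ) ≤ n := le_trans (le_max_right _ _) hn
  have hsn : 0 < Real.sqrt n :=
    Real.sqrt_pos.2 (by exact_mod_cast Nat.lt_of_lt_of_le Nat.zero_lt_one hn1)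
  refine prb_mono_support (prodP_nonneg hPi.1 n) (summable_prodP hPi.1 hPi.2.summable n)
    (fun y hPy hy => ?_)
  simp only [Set.mem_setOf_eq] at hy ⊢
  have hQpos : 0 < Q n y := lt_of_lt_of_le (mul_pos hwi hPy) (hQ n y)
  have hlog : Real.log (1 / Q n y) ≤ Real.log (1 / wi) + Real.log (1 / prodP Pi n y) := by
    rw [one_div, one_div, one_div, Real.log_inv, Real.log_inv, Real.log_inv]
    have h := Real.log_le_log (mul_pos hwi hPy) (hQ n y)
    rw [Real.log_mul (ne_of_gt hwi) (ne_of_gt hPy)] at h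
    linarith
  have h1 : (1 / Real.sqrt n) * Real.log (1 / Q n y)
      ≤ (1 / Real.sqrt n) * (Real.log (1 / wi) + Real.log (1 / prodP Pi n y)) :=
    mul_le_mul_of_nonneg_left hlog (by positivity)
  have h2 : (1 / Real.sqrt n) * Real.log (1 / wi) ≤ γ n := by
    rw [one_div, inv_mul_le_iff₀ hsn]
    exact hN n (le_trans (le_max_left _ _) hn)
  have h3 := mul_add (1 / Real.sqrt n) (Real.log (1 / wi)) (Real.log (1 / prodP Pi n y))
  linarith

/-- Key lemma for mixed sources (Han), second inequality: for a mixed source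
`Yⁿ = w(1) Y₁ⁿ + w(2) Y₂ⁿ` of two i.i.d. sources, any real sequence `z_n` and any
sequence `γ_n` with `γ₁ > γ₂ > ⋯ > 0`, `γ_n → 0`, `√n γ_n → ∞`, one has for
`i = 1,2` and all sufficiently large `n`:
`Pr{ (1/√n) log(1/P_{Yⁿ}(Yᵢⁿ)) ≥ z_n } ≤ Pr{ (1/√n) log(1/P_{Yᵢⁿ}(Yᵢⁿ)) ≥ z_n − γ_n }`. -/
theorem mixed_source_lemma_second
    {𝒴 : Type*} [Countable 𝒴]
    (P1 P2 : 𝒴 → ℝ) (hP1 : IsPMF P1) (hP2 : IsPMF P2)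
    (w1 w2 : ℝ) (hw1 : 0 < w1) (hw2 : 0 < w2) (hw : w1 + w2 = 1)
    (z γ : ℕ → ℝ) (hγanti : StrictAnti γ) (hγpos : ∀ n, 0 < γ n)
    (hγ0 : Filter.Tendsto γ Filter.atTop (nhds 0))
    (hγtop : Filter.Tendsto (fun n : ℕ => Real.sqrt n * γ n) Filter.atTop Filter.atTop)
    (Pi : 𝒴 → ℝ) (hPi : Pi = P1 ∨ Pi = P2) :
    ∃ N : ℕ, ∀ n ≥ N,
      prb (prodP Pi n)
          {y | z n ≤ (1 / Real.sqrt n) * Real.log (1 / mix2 P1 P2 w1 w2 n y)}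
        ≤ prb (prodP Pi n)
            {y | z n - γ n ≤ (1 / Real.sqrt n) * Real.log (1 / prodP Pi n y)} := by
  rcases hPi with rfl | rfl
  · exact key_aux Pi hP1 (mix2 Pi P2 w1 w2) w1 hw1
      (fun n y => le_add_of_nonneg_right (mul_nonneg hw2.le (prodP_nonneg hP2.1 n y))) z γ hγtop
  · exact key_aux Pi hP2 (mix2 P1 Pi w1 w2) w2 hw2
      (fun n y => le_add_of_nonneg_left (mul_nonneg hw1.le (prodP_nonneg hP1.1 n y))) z γ hγtop
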